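/- There exists a Markov operator T on ℓ¹(ℕ₀) such that: the fixed space of T is spanned by e₀; for every 0 < f ∈ ℓ¹ there is c_f > 0 with T^n f ≥ c_f e₀ for all n ∈ ℕ (so each orbit has a non-zero individual lower bound); yet no subsequence of (T^n) converges weakly. Explicitly, with h := (2^{-n})_{n≥0} ∈ ℓ^∞, M the multiplication operator with symbol 1 − h, and S the right shift, the operator Tf := ⟨h,f⟩ e₀ + SMf has these properties; in particular T^n e₁ = (1−c_n)e₀ + c_n e_{n+1} where c_n = ∏_{k=1}^n (1 − 2^{-k}). -/

import Mathlib

open Filter Topology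



noncomputable section
namespace MyCE

abbrev L1 := lp (fun _ : ℕ => ℝ) 1

lemma L1.summable (f : L1) : Summable fun k => ‖f k‖ := by
  have := (lp.memℓp f).summable (p := 1) (by norm_num)
  simpa using this

lemma L1.norm_eq (f : L1) : ‖f‖ = ∑' k, ‖f k‖ := by
  have := lp.norm_rpow_eq_tsum (p := 1) (by norm_num) f
  simpa using this

def Tfun (f : ℕ → ℝ) (k : ℕ) : ℝ :=
  if k = 0 then ∑' j : ℕ, (2:ℝ)⁻¹ ^ j * f j else (1 - (2:ℝ)⁻¹ ^ (k - 1)) * f (k - 1)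

lemma summable_aux (f : L1) : Summable fun j : ℕ => (2:ℝ)⁻¹ ^ j * f j := by
  refine (L1.summable f).of_norm_bounded (fun j => ?_)
  rw [norm_mul]
  calc ‖(2:ℝ)⁻¹ ^ j‖ * ‖f j‖ ≤ 1 * ‖f j‖ := by
        gcongr
        rw [norm_pow, Real.norm_eq_abs]
        calc |(2:ℝ)⁻¹| ^ j ≤ 1 ^ j := by
              have : |(2:ℝ)⁻¹| ≤ 1 := by rw [abs_of_nonneg] <;> norm_num
              exact pow_le_pow_left₀ (abs_nonneg _) this j
          _ = 1 := one_pow j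
    _ = ‖f j‖ := one_mul _

lemma coeff_bound (k : ℕ) : |1 - (2:ℝ)⁻¹ ^ k| ≤ 1 := by
  rw [abs_le]
  have h1 : (0:ℝ) < 2⁻¹ ^ k := pow_pos (by norm_num) k
  have h2 : (2:ℝ)⁻¹ ^ k ≤ 1 := pow_le_one₀ (by norm_num) (by norm_num)
  constructor <;> linarith

lemma memℓp_Tfun (f : L1) : Memℓp (Tfun f) 1 := by
  apply memℓp_gen
  have h1 : (1:ENNReal).toReal = 1 := by simp
  simp only [h1, Real.rpow_one]
  rw [← summable_nat_add_iff 1]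
  refine (L1.summable f).of_nonneg_of_le (fun k => norm_nonneg _) (fun k => ?_)
  simp only [Tfun, Nat.add_sub_cancel, if_neg (Nat.succ_ne_zero k)]
  rw [norm_mul, Real.norm_eq_abs (1 - _)]
  calc |1 - (2:ℝ)⁻¹ ^ k| * ‖f k‖ ≤ 1 * ‖f k‖ := by gcongr; exact coeff_bound k
    _ = ‖f k‖ := one_mul _

end MyCE
namespace MyCE

def Tlin : L1 →ₗ[ℝ] L1 where
  toFun f := ⟨Tfun f, memℓp_Tfun f⟩
  map_add' f g := by
    apply lp.ext; funext k
    show Tfun (⇑(f + g)) k = Tfun f k + Tfun g k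
    have hfg : ⇑(f + g) = ⇑f + ⇑g := lp.coeFn_add f g
    rcases Nat.eq_zero_or_pos k with rfl | hk
    · simp only [Tfun, if_pos rfl, if_true, hfg, Pi.add_apply]
      rw [← Summable.tsum_add (summable_aux f) (summable_aux g)]
      exact tsum_congr fun j => by ring
    · simp only [Tfun, if_neg hk.ne', hfg, Pi.add_apply]; ring
  map_smul' c f := by
    apply lp.ext; funext k
    show Tfun (⇑(c • f)) k = c * Tfun f k
    have hcf : ⇑(c • f) = c • ⇑f := lp.coeFn_smul c f
    rcases Nat.eq_zero_or_pos k with rfl | hk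
    · simp only [Tfun, if_pos rfl, if_true, hcf, Pi.smul_apply, smul_eq_mul]
      rw [← tsum_mul_left]
      exact tsum_congr fun j => by ring
    · simp only [Tfun, if_neg hk.ne', hcf, Pi.smul_apply, smul_eq_mul]; ring

lemma Tlin_apply (f : L1) (k : ℕ) : (Tlin f) k = Tfun f k := rfl

lemma tsum_norm_shift (f : L1) : ∑' k : ℕ, ‖Tfun f (k + 1)‖ ≤ ‖f‖ := by
  rw [L1.norm_eq]
  refine Summable.tsum_le_tsum (fun k => ?_) ?_ (L1.summable f)
  · simp only [Tfun, Nat.add_sub_cancel, if_neg (Nat.succ_ne_zero k)]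
    rw [norm_mul, Real.norm_eq_abs (1 - _)]
    calc |1 - (2:ℝ)⁻¹ ^ k| * ‖f k‖ ≤ 1 * ‖f k‖ := by gcongr; exact coeff_bound k
      _ = ‖f k‖ := one_mul _
  · refine (L1.summable f).of_nonneg_of_le (fun k => norm_nonneg _) (fun k => ?_)
    simp only [Tfun, Nat.add_sub_cancel, if_neg (Nat.succ_ne_zero k)]
    rw [norm_mul, Real.norm_eq_abs (1 - _)]
    calc |1 - (2:ℝ)⁻¹ ^ k| * ‖f k‖ ≤ 1 * ‖f k‖ := by gcongr; exact coeff_bound k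
      _ = ‖f k‖ := one_mul _

lemma norm_head (f : L1) : ‖Tfun f 0‖ ≤ ‖f‖ := by
  simp only [Tfun, if_pos rfl]
  calc ‖∑' j : ℕ, (2:ℝ)⁻¹ ^ j * f j‖ ≤ ∑' j : ℕ, ‖(2:ℝ)⁻¹ ^ j * f j‖ :=
        norm_tsum_le_tsum_norm ((summable_aux f).norm)
    _ ≤ ∑' j : ℕ, ‖f j‖ := by
        refine Summable.tsum_le_tsum (fun j => ?_) (summable_aux f).norm (L1.summable f)
        rw [norm_mul]
        calc ‖(2:ℝ)⁻¹ ^ j‖ * ‖f j‖ ≤ 1 * ‖f j‖ := by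
              gcongr
              rw [norm_pow, Real.norm_eq_abs]
              have : |(2:ℝ)⁻¹| ≤ 1 := by rw [abs_of_nonneg] <;> norm_num
              calc |(2:ℝ)⁻¹| ^ j ≤ 1 ^ j := pow_le_pow_left₀ (abs_nonneg _) this j
                _ = 1 := one_pow j
          _ = ‖f j‖ := one_mul _
    _ = ‖f‖ := (L1.norm_eq f).symm

lemma Tlin_summable_norm (f : L1) : Summable fun k => ‖Tfun f k‖ := L1.summable (Tlin f)

lemma norm_Tlin_le (f : L1) : ‖Tlin f‖ ≤ 2 * ‖f‖ := by
  rw [L1.norm_eq]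
  have : ∑' k, ‖(Tlin f) k‖ = ‖Tfun f 0‖ + ∑' k : ℕ, ‖Tfun f (k + 1)‖ := by
    simpa [Tlin_apply] using Summable.tsum_eq_zero_add (Tlin_summable_norm f)
  rw [this]
  have := norm_head f
  have := tsum_norm_shift f
  linarith

def T : L1 →L[ℝ] L1 := Tlin.mkContinuous 2 norm_Tlin_le

lemma T_apply (f : L1) (k : ℕ) : (T f) k = Tfun f k := rfl

end MyCE
namespace MyCE

lemma one_sub_pow_nonneg (k : ℕ) : (0:ℝ) ≤ 1 - (2:ℝ)⁻¹ ^ k := by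
  have : (2:ℝ)⁻¹ ^ k ≤ 1 := pow_le_one₀ (by norm_num) (by norm_num)
  linarith

lemma T_pos (f : L1) (hf : ∀ k, 0 ≤ f k) : ∀ k, 0 ≤ T f k := by
  intro k
  rw [T_apply]
  rcases Nat.eq_zero_or_pos k with rfl | hk
  · simp only [Tfun, if_pos rfl, if_true]
    exact tsum_nonneg fun j => mul_nonneg (by positivity) (hf j)
  · simp only [Tfun, if_neg hk.ne']
    exact mul_nonneg (one_sub_pow_nonneg _) (hf _)

lemma summable_shift (f : L1) : Summable fun k : ℕ => (1 - (2:ℝ)⁻¹ ^ k) * f k := by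
  refine (L1.summable f).of_norm_bounded (fun k => ?_)
  rw [norm_mul, Real.norm_eq_abs (1 - _)]
  calc |1 - (2:ℝ)⁻¹ ^ k| * ‖f k‖ ≤ 1 * ‖f k‖ := by gcongr; exact coeff_bound k
    _ = ‖f k‖ := one_mul _

lemma T_markov (f : L1) (hf : ∀ k, 0 ≤ f k) : ‖T f‖ = ‖f‖ := by
  have hTf : ∀ k, 0 ≤ T f k := T_pos f hf
  have hs : Summable fun k => T f k :=
    (Tlin_summable_norm f).congr fun k => Real.norm_of_nonneg (hTf k)
  calc ‖T f‖ = ∑' k, ‖T f k‖ := L1.norm_eq _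
    _ = ∑' k, T f k := tsum_congr fun k => Real.norm_of_nonneg (hTf k)
    _ = T f 0 + ∑' k : ℕ, T f (k + 1) := Summable.tsum_eq_zero_add hs
    _ = (∑' j : ℕ, (2:ℝ)⁻¹ ^ j * f j) + ∑' k : ℕ, (1 - (2:ℝ)⁻¹ ^ k) * f k := by
        have h0 : T f 0 = ∑' j : ℕ, (2:ℝ)⁻¹ ^ j * f j := rfl
        rw [h0]
        have h1 : (∑' k : ℕ, T f (k + 1)) = ∑' k : ℕ, (1 - (2:ℝ)⁻¹ ^ k) * f k :=
          tsum_congr fun k => by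
            rw [T_apply]
            simp only [Tfun, Nat.add_sub_cancel, if_neg (Nat.succ_ne_zero k)]
        rw [h1]
    _ = ∑' j : ℕ, ((2:ℝ)⁻¹ ^ j * f j + (1 - (2:ℝ)⁻¹ ^ j) * f j) :=
        (Summable.tsum_add (summable_aux f) (summable_shift f)).symm
    _ = ∑' j : ℕ, f j := tsum_congr fun j => by ring
    _ = ∑' j : ℕ, ‖f j‖ := tsum_congr fun j => (Real.norm_of_nonneg (hf j)).symm
    _ = ‖f‖ := (L1.norm_eq f).symm

lemma T_fixed (f : L1) (hfix : T f = f) : ∃ c : ℝ, f = c • lp.single 1 0 (1:ℝ) := by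
  refine ⟨f 0, ?_⟩
  have hco : ∀ k, Tfun f k = f k := fun k => by
    rw [← T_apply, hfix]
  have hzero : ∀ m, 1 ≤ m → f m = 0 := by
    intro m hm
    induction m with
    | zero => omega
    | succ n ih =>
      have h := hco (n + 1)
      simp only [Tfun, Nat.add_sub_cancel, if_neg (Nat.succ_ne_zero n)] at h
      rcases Nat.eq_zero_or_pos n with rfl | hn
      · simp at h; linarith [h]
      · rw [ih hn] at h; linarith [h]
  apply lp.ext; funext k
  have hsm : (f 0 • lp.single 1 0 (1:ℝ) : L1) k = f 0 * (lp.single 1 0 (1:ℝ) : L1) k := by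
    rw [lp.coeFn_smul]; rfl
  rcases Nat.eq_zero_or_pos k with rfl | hk
  · rw [hsm, lp.single_apply_self]; ring
  · rw [hsm, lp.single_apply_ne 1 0 _ hk.ne', hzero k hk]; ring

lemma T_pow_pos (f : L1) (hf : ∀ k, 0 ≤ f k) (n : ℕ) : ∀ k, 0 ≤ (T ^ n) f k := by
  induction n generalizing f hf with
  | zero => simpa using hf
  | succ n ih =>
    intro k
    have : (T ^ (n + 1)) f = (T ^ n) (T f) := by
      rw [pow_succ]; rfl
    rw [this]
    exact ih (T f) (T_pos f hf) k

lemma T_zero_ge (f : L1) (hf : ∀ k, 0 ≤ f k) (j : ℕ) : (2:ℝ)⁻¹ ^ j * f j ≤ T f 0 := by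
  rw [T_apply]
  simp only [Tfun, if_pos rfl, if_true]
  exact Summable.le_tsum (summable_aux f) j fun i _ => mul_nonneg (by positivity) (hf i)

lemma T_lower (f : L1) (hf : ∀ k, 0 ≤ f k) (hne : f ≠ 0) :
    ∃ c > (0:ℝ), ∀ n : ℕ, 1 ≤ n → (c ≤ (T ^ n) f 0 ∧ ∀ k, 0 ≤ (T ^ n) f k) := by
  have : ∃ k0, f k0 ≠ 0 := by
    by_contra h
    push_neg at h
    exact hne (lp.ext (funext fun k => h k))
  obtain ⟨k0, hk0⟩ := this
  have hfk0 : 0 < f k0 := lt_of_le_of_ne (hf k0) (Ne.symm hk0)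
  refine ⟨(2:ℝ)⁻¹ ^ k0 * f k0, by positivity, ?_⟩
  have key : ∀ m : ℕ, (2:ℝ)⁻¹ ^ k0 * f k0 ≤ (T ^ (m + 1)) f 0 := by
    intro m
    induction m with
    | zero => simpa using T_zero_ge f hf k0
    | succ n ih =>
      have heq : (T ^ (n + 2)) f = T ((T ^ (n + 1)) f) := by
        rw [pow_succ']; rfl
      rw [heq]
      have hpos := T_pow_pos f hf (n + 1)
      calc (2:ℝ)⁻¹ ^ k0 * f k0 ≤ (T ^ (n + 1)) f 0 := ih
        _ = (2:ℝ)⁻¹ ^ 0 * (T ^ (n + 1)) f 0 := by norm_num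
        _ ≤ T ((T ^ (n + 1)) f) 0 := T_zero_ge _ hpos 0
  intro n hn
  obtain ⟨m, rfl⟩ : ∃ m, n = m + 1 := ⟨n - 1, by omega⟩
  exact ⟨key m, T_pow_pos f hf (m + 1)⟩

end MyCE
namespace MyCE

lemma single_coe (m : ℕ) (k : ℕ) :
    (lp.single 1 m (1:ℝ) : L1) k = if k = m then 1 else 0 := by
  rcases eq_or_ne k m with rfl | h
  · rw [lp.single_apply_self, if_pos rfl]
  · rw [lp.single_apply_ne 1 m _ h, if_neg h]

lemma T_single (m : ℕ) :
    T (lp.single 1 m (1:ℝ)) =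
      ((2:ℝ)⁻¹ ^ m) • lp.single 1 0 (1:ℝ) + (1 - (2:ℝ)⁻¹ ^ m) • lp.single 1 (m + 1) (1:ℝ) := by
  apply lp.ext; funext k
  have hR : ((((2:ℝ)⁻¹ ^ m) • lp.single 1 0 (1:ℝ) +
      (1 - (2:ℝ)⁻¹ ^ m) • lp.single 1 (m + 1) (1:ℝ) : L1) : ℕ → ℝ) k =
      (2:ℝ)⁻¹ ^ m * (if k = 0 then (1:ℝ) else 0) +
      (1 - (2:ℝ)⁻¹ ^ m) * (if k = m + 1 then (1:ℝ) else 0) := by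
    rw [lp.coeFn_add, Pi.add_apply, lp.coeFn_smul, lp.coeFn_smul, Pi.smul_apply, Pi.smul_apply,
      smul_eq_mul, smul_eq_mul, single_coe, single_coe]
  rw [hR]
  show Tfun (lp.single 1 m (1:ℝ)) k = _
  rcases Nat.eq_zero_or_pos k with rfl | hk
  · simp only [Tfun, if_pos rfl, if_true]
    rw [tsum_eq_single m (fun j hj => by rw [single_coe, if_neg hj, mul_zero])]
    rw [single_coe, if_pos rfl]
    simp [Nat.succ_ne_zero]
  · simp only [Tfun, if_neg hk.ne', single_coe]
    rcases eq_or_ne k (m + 1) with rfl | hkm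
    · simp [Nat.add_sub_cancel]
    · have h1 : k - 1 ≠ m := by omega
      rw [if_neg h1, if_neg hkm]
      ring

def prodc (n : ℕ) : ℝ := ∏ k ∈ Finset.Icc 1 n, (1 - (2:ℝ)⁻¹ ^ k)

lemma T_orbit (n : ℕ) : (T ^ n) (lp.single 1 1 (1:ℝ)) =
    (1 - prodc n) • lp.single 1 0 (1:ℝ) + prodc n • lp.single 1 (n + 1) (1:ℝ) := by
  induction n with
  | zero =>
    simp only [pow_zero, ContinuousLinearMap.one_apply, prodc]
    rw [Finset.Icc_eq_empty (by omega : ¬ (1:ℕ) ≤ 0)]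
    simp
  | succ n ih =>
    have hc : prodc (n + 1) = prodc n * (1 - (2:ℝ)⁻¹ ^ (n + 1)) := by
      rw [prodc, prodc, Finset.prod_Icc_succ_top (by omega : 1 ≤ n + 1)]
    have hstep : (T ^ (n + 1)) (lp.single 1 1 (1:ℝ)) = T ((T ^ n) (lp.single 1 1 (1:ℝ))) := by
      rw [pow_succ']; rfl
    rw [hstep, ih, map_add, map_smul, map_smul, T_single, T_single, hc]
    have h0 : (2:ℝ)⁻¹ ^ 0 = 1 := pow_zero _
    module
end MyCE
namespace MyCE

def coordL (k : ℕ) : L1 →L[ℝ] ℝ :=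
  LinearMap.mkContinuous
    { toFun := fun f => f k
      map_add' := fun f g => by simp only [lp.coeFn_add, Pi.add_apply]
      map_smul' := fun c f => by simp only [lp.coeFn_smul, Pi.smul_apply, smul_eq_mul,
        RingHom.id_apply] } 1
    (fun f => by
      rw [one_mul]
      exact lp.norm_apply_le_norm (by norm_num) f k)

lemma coordL_apply (k : ℕ) (f : L1) : coordL k f = f k := rfl

def sumL : L1 →L[ℝ] ℝ :=
  LinearMap.mkContinuous
    { toFun := fun f => ∑' k, f k
      map_add' := fun f g => by
        simp only [lp.coeFn_add, Pi.add_apply]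
        exact Summable.tsum_add (L1.summable f).of_norm (L1.summable g).of_norm
      map_smul' := fun c f => by
        simp only [lp.coeFn_smul, Pi.smul_apply, smul_eq_mul, RingHom.id_apply]
        exact tsum_mul_left }
    1
    (fun f => by
      rw [one_mul, L1.norm_eq]
      calc ‖∑' k, f k‖ ≤ ∑' k, ‖f k‖ := norm_tsum_le_tsum_norm (L1.summable f)
        _ = ‖f‖ - ‖f‖ + ∑' k, ‖f k‖ := by ring
        _ = ∑' k, ‖f k‖ := by rw [L1.norm_eq]; ring)

lemma sumL_apply (f : L1) : sumL f = ∑' k, f k := rfl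

lemma sumL_single (m : ℕ) : sumL (lp.single 1 m (1:ℝ)) = 1 := by
  rw [sumL_apply, tsum_eq_single m (fun j hj => by rw [single_coe, if_neg hj])]
  rw [single_coe, if_pos rfl]

lemma prodc_ge (n : ℕ) (hn : 1 ≤ n) : 1/4 + (2:ℝ)⁻¹ ^ (n + 1) ≤ prodc n := by
  induction n, hn using Nat.le_induction with
  | base =>
    have : prodc 1 = 1 - (2:ℝ)⁻¹ := by
      rw [prodc, Finset.Icc_self, Finset.prod_singleton, pow_one]
    rw [this]; norm_num
  | succ n hn ih =>
    have hc : prodc (n + 1) = prodc n * (1 - (2:ℝ)⁻¹ ^ (n + 1)) := by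
      rw [prodc, prodc, Finset.prod_Icc_succ_top (by omega : 1 ≤ n + 1)]
    rw [hc]
    have hx : (2:ℝ)⁻¹ ^ (n + 1) ≤ (2:ℝ)⁻¹ ^ 2 := by
      apply pow_le_pow_of_le_one (by norm_num) (by norm_num) (by omega)
    have hx2 : ((2:ℝ)⁻¹) ^ (n + 2) = (2:ℝ)⁻¹ ^ (n+1) * 2⁻¹ := by ring
    have hxpos : (0:ℝ) < (2:ℝ)⁻¹ ^ (n + 1) := by positivity
    nlinarith [ih]

lemma prodc_quarter (n : ℕ) : (1:ℝ)/4 ≤ prodc n := by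
  rcases Nat.eq_zero_or_pos n with rfl | hn
  · have : prodc 0 = 1 := by
      rw [prodc, Finset.Icc_eq_empty (by omega : ¬ (1:ℕ) ≤ 0), Finset.prod_empty]
    rw [this]; norm_num
  · have := prodc_ge n hn
    have : (0:ℝ) < (2:ℝ)⁻¹ ^ (n + 1) := by positivity
    linarith [prodc_ge n hn]

lemma no_weak_conv (ν : ℕ → ℕ) (hν : StrictMono ν) :
    ¬ ∃ Q : L1 → L1,
      ∀ (f : L1) (φ : L1 →L[ℝ] ℝ),
        Filter.Tendsto (fun j : ℕ => φ ((T ^ ν j) f)) Filter.atTop (nhds (φ (Q f))) := by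
  rintro ⟨Q, hQ⟩
  set e₁ : L1 := lp.single 1 1 (1:ℝ)
  -- sum functional: always 1
  have hsum : ∀ n, sumL ((T ^ n) e₁) = 1 := by
    intro n
    rw [T_orbit, map_add, map_smul, map_smul, sumL_single, sumL_single]
    rw [smul_eq_mul, smul_eq_mul]; ring
  have h1 : sumL (Q e₁) = 1 := by
    have h := hQ e₁ sumL
    simp only [hsum] at h
    exact tendsto_nhds_unique h tendsto_const_nhds
  -- coordinates k ≥ 1 vanish
  have hcoord : ∀ k, 1 ≤ k → (Q e₁ : ℕ → ℝ) k = 0 := by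
    intro k hk
    have htend := hQ e₁ (coordL k)
    have hev : ∀ᶠ j in Filter.atTop, coordL k ((T ^ ν j) e₁) = 0 := by
      filter_upwards [Filter.eventually_ge_atTop k] with j hj
      have hνj : k ≤ ν j := le_trans hj (hν.le_apply)
      rw [T_orbit, map_add, map_smul, map_smul]
      simp only [coordL_apply, smul_eq_mul]
      rw [single_coe, single_coe, if_neg (by omega : k ≠ 0), if_neg (by omega : k ≠ ν j + 1)]
      ring
    have : Filter.Tendsto (fun j : ℕ => coordL k ((T ^ ν j) e₁)) Filter.atTop (nhds 0) :=
      Filter.Tendsto.congr' (hev.mono fun j hj => hj.symm) tendsto_const_nhds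
    exact tendsto_nhds_unique htend this
  -- hence sumL (Q e₁) = (Q e₁) 0
  have h2 : sumL (Q e₁) = (Q e₁ : ℕ → ℝ) 0 := by
    rw [sumL_apply]
    exact tsum_eq_single 0 (fun j hj => hcoord j (by omega))
  -- coordinate 0 : 1 - prodc (ν j) → (Q e₁) 0 = 1
  have h0 : Filter.Tendsto (fun j : ℕ => 1 - prodc (ν j)) Filter.atTop (nhds 1) := by
    have htend := hQ e₁ (coordL 0)
    have heq : ∀ j, coordL 0 ((T ^ ν j) e₁) = 1 - prodc (ν j) := by
      intro j
      rw [T_orbit, map_add, map_smul, map_smul]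
      simp only [coordL_apply, smul_eq_mul]
      rw [single_coe, single_coe, if_pos rfl, if_neg (by omega : (0:ℕ) ≠ ν j + 1)]
      ring
    have h3 : coordL 0 (Q e₁) = 1 := by rw [coordL_apply, ← h2, h1]
    simpa [h3] using htend.congr heq
  have h4 : Filter.Tendsto (fun j : ℕ => prodc (ν j)) Filter.atTop (nhds 0) := by
    have := h0.const_sub 1
    simpa using this
  have h5 : (1:ℝ)/4 ≤ 0 :=
    ge_of_tendsto h4 (Filter.Eventually.of_forall fun j => prodc_quarter (ν j))
  linarith

end MyCE

end

/-- There is a Markov operator `T` on `ℓ¹(ℕ₀)` — explicitly, with `h = (2^{-n})_n`,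
`M` multiplication by `1 - h` and `S` the right shift, `T f = ⟨h, f⟩ e₀ + S M f` —
whose fixed space is spanned by `e₀`, such that every positive non-zero `f` admits the
individual lower bound `c_f e₀` with `c_f > 0` (i.e. `T^n f ≥ c_f e₀` for all `n ≥ 1`),
with `T^n e₁ = (1 - c_n) e₀ + c_n e_{n+1}` where `c_n = ∏_{k=1}^n (1 - 2^{-k})`, and yet
no subsequence of `(T^n)` converges weakly. -/
theorem exists_markov_operator_with_individual_lower_bounds_but_no_weak_convergence :
    ∃ T : lp (fun _ : ℕ => ℝ) 1 →L[ℝ] lp (fun _ : ℕ => ℝ) 1,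
      -- explicit formula: `T f = ⟨h, f⟩ e₀ + S M f`
      (∀ (f : lp (fun _ : ℕ => ℝ) 1) (k : ℕ),
        T f k = if k = 0 then ∑' j : ℕ, (2:ℝ)⁻¹ ^ j * f j
                else (1 - (2:ℝ)⁻¹ ^ (k - 1)) * f (k - 1)) ∧
      -- `T` is positive
      (∀ f : lp (fun _ : ℕ => ℝ) 1, (∀ k, 0 ≤ f k) → ∀ k, 0 ≤ T f k) ∧
      -- `T` is a Markov operator
      (∀ f : lp (fun _ : ℕ => ℝ) 1, (∀ k, 0 ≤ f k) → ‖T f‖ = ‖f‖) ∧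
      -- the fixed space of `T` is spanned by `e₀`
      (∀ f : lp (fun _ : ℕ => ℝ) 1, T f = f → ∃ c : ℝ, f = c • lp.single 1 0 (1:ℝ)) ∧
      -- individual lower bounds `c_f e₀`
      (∀ f : lp (fun _ : ℕ => ℝ) 1, (∀ k, 0 ≤ f k) → f ≠ 0 →
        ∃ c > (0:ℝ), ∀ n : ℕ, 1 ≤ n →
          (c ≤ (T ^ n) f 0 ∧ ∀ k, 0 ≤ (T ^ n) f k)) ∧
      -- explicit orbit of `e₁`
      (∀ n : ℕ, (T ^ n) (lp.single 1 1 (1:ℝ)) =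
          (1 - ∏ k ∈ Finset.Icc 1 n, (1 - (2:ℝ)⁻¹ ^ k)) • lp.single 1 0 (1:ℝ) +
          (∏ k ∈ Finset.Icc 1 n, (1 - (2:ℝ)⁻¹ ^ k)) • lp.single 1 (n + 1) (1:ℝ)) ∧
      -- no subsequence of `(T^n)` converges weakly
      (∀ ν : ℕ → ℕ, StrictMono ν →
        ¬ ∃ Q : lp (fun _ : ℕ => ℝ) 1 → lp (fun _ : ℕ => ℝ) 1,
          ∀ (f : lp (fun _ : ℕ => ℝ) 1) (φ : lp (fun _ : ℕ => ℝ) 1 →L[ℝ] ℝ),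
            Tendsto (fun j : ℕ => φ ((T ^ ν j) f)) atTop (𝓝 (φ (Q f)))) := by
  refine ⟨MyCE.T, fun f k => rfl, MyCE.T_pos, MyCE.T_markov, MyCE.T_fixed, MyCE.T_lower,
    fun n => ?_, MyCE.no_weak_conv⟩
  simpa [MyCE.prodc] using MyCE.T_orbit n
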